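/- arXiv:2012.14772 — 2 statements merged into one kernel-verified Lean document; each statement's English description precedes it below -/
import Mathlib

section
/- Let (Ω,F,P) be a probability space, t fixed, and ξ a random variable taking values in a Polish space S with discrete law P_ξ = Σ_{i=1}^m p_i δ_{x_i}, where x_1,…,x_m ∈ S are distinct and p_i > 0 with Σ p_i = 1, and ξ is G-measurable for a sub-σ-algebra G. Suppose there exists a G-measurable random variable U_G uniform on [0,1]. Then there exists a G-measurable random variable U_ξ uniform on [0,1] and independent of ξ. -/
open MeasureTheory
open scoped ENNReal

open Set Filter Topology

lemma aux_iUnion_Iic (s : ℝ) : (⋃ n : ℕ, Iic (s - 1/(n+1))) = Iio s := by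
  ext r
  simp only [mem_iUnion, mem_Iic, mem_Iio]
  constructor
  · rintro ⟨n, hn⟩
    have : (0:ℝ) < 1/(n+1) := by positivity
    linarith
  · intro hr
    obtain ⟨n, hn⟩ := exists_nat_one_div_lt (sub_pos.2 hr)
    exact ⟨n, by push_cast at hn ⊢; linarith⟩

lemma aux_iInter_Iic (s : ℝ) : (⋂ n : ℕ, Iic (s + 1/(n+1))) = Iic s := by
  ext r
  simp only [mem_iInter, mem_Iic]
  constructor
  · intro h
    by_contra hr
    push_neg at hr
    obtain ⟨n, hn⟩ := exists_nat_one_div_lt (sub_pos.2 hr)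
    have := h n
    push_cast at hn this
    linarith
  · intro h n
    have : (0:ℝ) < 1/(n+1) := by positivity
    linarith

lemma aux_cdf_level {μ : Measure ℝ} [IsFiniteMeasure μ] [NullSingletonClass μ] (c : ℝ≥0∞) :
    μ {x | μ (Iic x) ≤ c} = min c (μ univ) := by
  set A : Set ℝ := {x | μ (Iic x) ≤ c} with hA
  by_cases hall : ∀ x : ℝ, μ (Iic x) ≤ c
  · have hAuniv : A = univ := eq_univ_of_forall hall
    have h1 : Tendsto (fun n : ℕ => μ (Iic (n:ℝ))) atTop (𝓝 (μ (⋃ n : ℕ, Iic (n:ℝ)))) :=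
      tendsto_measure_iUnion_atTop (fun a b hab => Iic_subset_Iic.2 (by exact_mod_cast hab))
    have hU : (⋃ n : ℕ, Iic ((n:ℝ))) = univ := by
      apply eq_univ_of_forall
      intro r
      obtain ⟨n, hn⟩ := exists_nat_ge r
      exact mem_iUnion.2 ⟨n, hn⟩
    rw [hU] at h1
    have h2 : μ univ ≤ c := le_of_tendsto' h1 (fun n => hall _)
    rw [hAuniv, min_eq_right h2]
  · push_neg at hall
    obtain ⟨b, hb⟩ := hall
    have hbd : ∀ a ∈ A, a ≤ b := by
      intro a ha
      by_contra hab
      push_neg at hab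
      exact absurd (le_trans (measure_mono (Iic_subset_Iic.2 hab.le)) ha) (not_le.2 hb)
    by_cases hne : A.Nonempty
    · set s := sSup A with hs
      have hbdd : BddAbove A := ⟨b, hbd⟩
      have hlt : ∀ r < s, μ (Iic r) ≤ c := by
        intro r hr
        obtain ⟨a, haA, hra⟩ := exists_lt_of_lt_csSup hne hr
        exact le_trans (measure_mono (Iic_subset_Iic.2 hra.le)) haA
      have hIio : μ (Iio s) ≤ c := by
        have h1 : Tendsto (fun n : ℕ => μ (Iic (s - 1/(n+1)))) atTop
            (𝓝 (μ (⋃ n : ℕ, Iic (s - 1/(n+1))))) := by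
          apply tendsto_measure_iUnion_atTop
          intro a b hab
          apply Iic_subset_Iic.2
          have : (1:ℝ)/(b+1) ≤ 1/(a+1) := by
            apply one_div_le_one_div_of_le (by positivity)
            exact_mod_cast by omega
          linarith
        rw [aux_iUnion_Iic] at h1
        refine le_of_tendsto' h1 (fun n => hlt _ ?_)
        have : (0:ℝ) < 1/(n+1) := by positivity
        linarith
      have hsA : s ∈ A := by
        have : μ (Iic s) = μ (Iio s) := (measure_congr (Iio_ae_eq_Iic (μ := μ) (a := s))).symm
        simpa [hA, this] using hIio
      have hAeq : A = Iic s := by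
        apply Subset.antisymm
        · exact fun a ha => le_csSup hbdd ha
        · intro r hr
          exact le_trans (measure_mono (Iic_subset_Iic.2 hr)) hsA
      have hge : c ≤ μ (Iic s) := by
        have h1 : Tendsto (fun n : ℕ => μ (Iic (s + 1/(n+1)))) atTop
            (𝓝 (μ (⋂ n : ℕ, Iic (s + 1/(n+1))))) := by
          apply tendsto_measure_iInter_atTop
            (fun n => measurableSet_Iic.nullMeasurableSet)
          · intro a b hab
            apply Iic_subset_Iic.2
            have : (1:ℝ)/(b+1) ≤ 1/(a+1) := by
              apply one_div_le_one_div_of_le (by positivity)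
              exact_mod_cast by omega
            linarith
          · exact ⟨0, measure_ne_top _ _⟩
        rw [aux_iInter_Iic] at h1
        refine ge_of_tendsto' h1 (fun n => ?_)
        have hnotA : s + 1/(n+1) ∉ A := by
          intro hmem
          have h2 := le_csSup hbdd hmem
          have : (0:ℝ) < 1/(n+1) := by positivity
          linarith
        exact le_of_not_ge hnotA
      have hval : μ A = c := by
        rw [hAeq]
        exact le_antisymm hsA hge
      rw [hval, min_eq_left (hval ▸ measure_mono (subset_univ A))]
    · rw [not_nonempty_iff_eq_empty] at hne
      have hc0 : c = 0 := by
        have h1 : Tendsto (fun n : ℕ => μ (Iic (-(n:ℝ)))) atTop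
            (𝓝 (μ (⋂ n : ℕ, Iic (-(n:ℝ))))) := by
          apply tendsto_measure_iInter_atTop (fun n => measurableSet_Iic.nullMeasurableSet)
          · exact fun a b hab => Iic_subset_Iic.2 (by push_cast; exact_mod_cast neg_le_neg (by exact_mod_cast hab))
          · exact ⟨0, measure_ne_top _ _⟩
        have hint : (⋂ n : ℕ, Iic (-(n:ℝ))) = ∅ := by
          apply eq_empty_iff_forall_notMem.2
          intro r hr
          simp only [mem_iInter, mem_Iic] at hr
          obtain ⟨n, hn⟩ := exists_nat_gt (-r)
          have := hr n
          linarith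
        rw [hint, measure_empty] at h1
        have hle : c ≤ 0 := by
          refine ge_of_tendsto' h1 (fun n => ?_)
          have : -(n:ℝ) ∉ A := by rw [hne]; exact notMem_empty _
          exact le_of_not_ge this
        exact le_antisymm hle zero_le
      rw [hne, hc0, measure_empty, min_eq_left zero_le]

lemma aux_unif_Iic (t : ℝ) :
    (volume.restrict (Icc (0:ℝ) 1)) (Iic t) = ENNReal.ofReal (min t 1) := by
  rw [Measure.restrict_apply measurableSet_Iic]
  have h : Iic t ∩ Icc (0:ℝ) 1 = Icc 0 (min t 1) := by
    ext r
    simp only [mem_inter_iff, mem_Iic, mem_Icc, le_min_iff]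
    tauto
  rw [h, Real.volume_Icc, sub_zero]

/-- Discrete randomization lemma: if a `G`-measurable random variable `ξ` with values
in a Polish space has a finitely supported law and `G` supports a uniform random
variable, then `G` supports a uniform random variable independent of `ξ`. -/
theorem stmt_5 {Ω S : Type*} (G : MeasurableSpace Ω) [MeasurableSpace Ω]
    [MetricSpace S] [CompleteSpace S] [SecondCountableTopology S]
    [MeasurableSpace S] [BorelSpace S]
    (hG : G ≤ ‹MeasurableSpace Ω›)
    (P : Measure Ω) [IsProbabilityMeasure P]
    (ξ : Ω → S) (hξ : Measurable[G] ξ)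
    (m : ℕ) (x : Fin m → S) (hx : Function.Injective x)
    (p : Fin m → ℝ≥0∞) (hp : ∀ i, 0 < p i) (hpsum : ∑ i, p i = 1)
    (hlaw : P.map ξ = ∑ i, p i • Measure.dirac (x i))
    (UG : Ω → ℝ) (hUG : Measurable[G] UG)
    (hUGlaw : P.map UG = volume.restrict (Set.Icc (0:ℝ) 1)) :
    ∃ Uξ : Ω → ℝ, Measurable[G] Uξ ∧
      P.map Uξ = volume.restrict (Set.Icc (0:ℝ) 1) ∧
      ProbabilityTheory.IndepFun ξ Uξ P := by
  classical
  have hξ0 : Measurable ξ := hξ.mono hG le_rfl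
  have hUG0 : Measurable UG := hUG.mono hG le_rfl
  set E : Fin m → Set Ω := fun i => ξ ⁻¹' {x i} with hE
  have hEmeasG : ∀ i, MeasurableSet[G] (E i) := fun i => hξ (measurableSet_singleton _)
  have hEmeas : ∀ i, MeasurableSet (E i) := fun i => hG _ (hEmeasG i)
  have hEdisj : Pairwise (Function.onFun Disjoint E) := by
    intro i j hij
    apply Set.disjoint_left.2
    intro ω hi hj
    exact hij (hx (hi.symm.trans hj))
  have hPE : ∀ i, P (E i) = p i := by
    intro i
    rw [hE]
    rw [← Measure.map_apply hξ0 (measurableSet_singleton _), hlaw]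
    rw [Measure.finset_sum_apply]
    rw [Finset.sum_eq_single i]
    · simp [Measure.dirac_apply' _ (measurableSet_singleton (x i))]
    · intro j _ hji
      have : x j ∉ ({x i} : Set S) := by
        simp only [mem_singleton_iff]
        exact fun h => hji (hx h)
      simp [Measure.dirac_apply' _ (measurableSet_singleton (x i)), this]
    · simp
  have hple : ∀ i, p i ≤ 1 := by
    intro i
    rw [← hpsum]
    exact Finset.single_le_sum (fun j _ => zero_le) (Finset.mem_univ i)
  have hpnt : ∀ i, p i ≠ ∞ := fun i => ne_top_of_le_ne_top ENNReal.one_ne_top (hple i)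
  -- conditional laws of UG on the atoms
  set μ : Fin m → Measure ℝ := fun i => (P.restrict (E i)).map UG with hμ
  have hμfin : ∀ i, IsFiniteMeasure (μ i) := fun i => by
    constructor
    rw [hμ, Measure.map_apply hUG0 MeasurableSet.univ]
    simp only [Set.preimage_univ]
    exact lt_of_le_of_lt (Measure.restrict_apply_le _ _) (measure_lt_top P _)
  have hμatomless : ∀ i, NullSingletonClass (μ i) := fun i => by
    constructor
    intro r
    have h1 : μ i {r} = P.restrict (E i) (UG ⁻¹' {r}) :=
      Measure.map_apply hUG0 (measurableSet_singleton r)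
    have h2 : P.restrict (E i) (UG ⁻¹' {r}) ≤ P (UG ⁻¹' {r}) :=
      Measure.restrict_le_self _
    have h3 : P (UG ⁻¹' {r}) = 0 := by
      rw [← Measure.map_apply hUG0 (measurableSet_singleton r), hUGlaw]
      rw [Measure.restrict_apply (measurableSet_singleton r)]
      exact measure_mono_null Set.inter_subset_left (Real.volume_singleton)
    exact le_antisymm (h1 ▸ h3 ▸ h2) zero_le
  have hμuniv : ∀ i, μ i univ = p i := by
    intro i
    rw [hμ, Measure.map_apply hUG0 MeasurableSet.univ]
    simp only [Set.preimage_univ, Measure.restrict_apply_univ]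
    exact hPE i
  -- the transform
  have hpR : ∀ i, 0 < (p i).toReal := fun i => ENNReal.toReal_pos (hp i).ne' (hpnt i)
  set g : Fin m → ℝ → ℝ := fun i r => (μ i (Iic r)).toReal / (p i).toReal with hg
  have hgmono : ∀ i, Monotone (g i) := by
    intro i a b hab
    haveI := hμfin i
    have h1 : (μ i (Iic a)).toReal ≤ (μ i (Iic b)).toReal :=
      ENNReal.toReal_mono (measure_ne_top _ _) (measure_mono (Iic_subset_Iic.2 hab))
    simp only [hg]
    gcongr
  have hgmeas : ∀ i, Measurable (g i) := fun i => (hgmono i).measurable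
  set Uξ : Ω → ℝ := fun ω => ∑ i, (E i).indicator (fun ω' => g i (UG ω')) ω with hUξ
  have hUξG : Measurable[G] Uξ := by
    apply Finset.measurable_sum
    intro i _
    exact Measurable.indicator ((hgmeas i).comp hUG) (hEmeasG i)
  have hUξ0 : Measurable Uξ := hUξG.mono hG le_rfl
  have hUξnonneg : ∀ ω, 0 ≤ Uξ ω := by
    intro ω
    apply Finset.sum_nonneg
    intro i _
    apply Set.indicator_nonneg
    intro ω' _
    have := (hpR i).le
    positivity
  have hUξ_on : ∀ i ω, ω ∈ E i → Uξ ω = g i (UG ω) := by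
    intro i ω hω
    simp only [hUξ]
    rw [Finset.sum_eq_single i]
    · rw [Set.indicator_of_mem hω]
    · intro j _ hji
      apply Set.indicator_of_notMem
      intro hωj
      have h1 : ξ ω = x j := hωj
      have h2 : ξ ω = x i := hω
      exact hji (hx (h1.symm.trans h2))
    · intro h; exact absurd (Finset.mem_univ i) h
  have hatomIic : ∀ i t, P (E i ∩ Uξ ⁻¹' Iic t) = p i * ENNReal.ofReal (min t 1) := by
    intro i t
    haveI := hμfin i
    haveI := hμatomless i
    rcases lt_or_ge t 0 with ht | ht
    · have hempty : E i ∩ Uξ ⁻¹' Iic t = ∅ := by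
        apply eq_empty_iff_forall_notMem.2
        rintro ω ⟨-, hω2⟩
        have := hUξnonneg ω
        simp only [mem_preimage, mem_Iic] at hω2
        linarith
      rw [hempty, measure_empty, min_eq_left (by linarith : t ≤ (1:ℝ)),
        ENNReal.ofReal_of_nonpos ht.le, mul_zero]
    · have hset : E i ∩ Uξ ⁻¹' Iic t = E i ∩ (fun ω => g i (UG ω)) ⁻¹' Iic t := by
        ext ω
        simp only [mem_inter_iff, mem_preimage, mem_Iic]
        constructor
        · rintro ⟨hω, hle⟩; exact ⟨hω, by rwa [← hUξ_on i ω hω]⟩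
        · rintro ⟨hω, hle⟩; exact ⟨hω, by rwa [hUξ_on i ω hω]⟩
      rw [hset]
      have hginv : g i ⁻¹' Iic t = {r | μ i (Iic r) ≤ ENNReal.ofReal (t * (p i).toReal)} := by
        ext r
        simp only [mem_preimage, mem_Iic, mem_setOf_eq, hg]
        rw [div_le_iff₀ (hpR i),
          ← ENNReal.le_ofReal_iff_toReal_le (measure_ne_top _ _) (by positivity)]
      have hmeas_pre : MeasurableSet (g i ⁻¹' Iic t) := (hgmeas i) measurableSet_Iic
      have h1 : P (E i ∩ (fun ω => g i (UG ω)) ⁻¹' Iic t) = μ i (g i ⁻¹' Iic t) := by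
        rw [hμ, Measure.map_apply hUG0 hmeas_pre,
          Measure.restrict_apply (hUG0 hmeas_pre), inter_comm]
        rfl
      rw [h1, hginv, aux_cdf_level, hμuniv]
      have hofr : ENNReal.ofReal (t * (p i).toReal) = ENNReal.ofReal t * p i := by
        rw [ENNReal.ofReal_mul ht, ENNReal.ofReal_toReal (hpnt i)]
      rw [hofr]
      rcases le_total t 1 with h | h
      · rw [min_eq_left h, min_eq_left, mul_comm]
        calc ENNReal.ofReal t * p i ≤ 1 * p i := by
              gcongr
              exact ENNReal.ofReal_le_one.2 h
          _ = p i := one_mul _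
      · rw [min_eq_right h, min_eq_right, ENNReal.ofReal_one, mul_one]
        calc p i = 1 * p i := (one_mul _).symm
          _ ≤ ENNReal.ofReal t * p i := by
              gcongr
              exact ENNReal.one_le_ofReal.2 h
  -- splitting over the atoms
  set Uu : Set Ω := ⋃ i, E i with hUu
  have hUumeas : MeasurableSet Uu := MeasurableSet.iUnion hEmeas
  have hPUu : P Uu = 1 := by
    rw [hUu, measure_iUnion hEdisj hEmeas, tsum_fintype]
    simp_rw [hPE]
    exact hpsum
  have hsplit : ∀ A : Set Ω, MeasurableSet A → P A = ∑ i, P (E i ∩ A) := by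
    intro A hA
    have h1 : P (A ∩ Uu) + P (A \ Uu) = P A := measure_inter_add_diff A hUumeas
    have hcompl : P Uuᶜ = 0 := by
      rw [measure_compl hUumeas (measure_ne_top _ _), hPUu, measure_univ, tsub_self]
    have h2 : P (A \ Uu) = 0 := measure_mono_null (diff_subset_compl A Uu) hcompl
    have h3 : A ∩ Uu = ⋃ i, E i ∩ A := by
      rw [inter_comm, hUu, iUnion_inter]
    have h4 : P (⋃ i, E i ∩ A) = ∑ i, P (E i ∩ A) := by
      rw [measure_iUnion
        (fun i j hij => (hEdisj hij).mono inter_subset_left inter_subset_left)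
        (fun i => (hEmeas i).inter hA), tsum_fintype]
    rw [← h1, h2, add_zero, h3, h4]
  -- the law of Uξ
  haveI : IsProbabilityMeasure (P.map Uξ) := Measure.isProbabilityMeasure_map hUξ0.aemeasurable
  have hmapUξ : P.map Uξ = volume.restrict (Icc (0:ℝ) 1) := by
    refine Measure.ext_of_Iic _ _ (fun t => ?_)
    rw [Measure.map_apply hUξ0 measurableSet_Iic, hsplit _ (hUξ0 measurableSet_Iic)]
    simp_rw [hatomIic]
    rw [← Finset.sum_mul, hpsum, one_mul, aux_unif_Iic]
  -- per-atom law of Uξ for general sets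
  have hatomB : ∀ i (B : Set ℝ), MeasurableSet B →
      P (E i ∩ Uξ ⁻¹' B) = p i * (volume.restrict (Icc (0:ℝ) 1)) B := by
    intro i B hB
    haveI : IsFiniteMeasure ((P.restrict (E i)).map Uξ) := by
      constructor
      rw [Measure.map_apply hUξ0 MeasurableSet.univ]
      simp only [Set.preimage_univ, Measure.restrict_apply_univ]
      exact measure_lt_top P _
    have hν : (P.restrict (E i)).map Uξ = p i • (volume.restrict (Icc (0:ℝ) 1)) := by
      refine Measure.ext_of_Iic _ _ (fun t => ?_)
      rw [Measure.map_apply hUξ0 measurableSet_Iic,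
        Measure.restrict_apply (hUξ0 measurableSet_Iic), inter_comm, hatomIic,
        Measure.smul_apply, smul_eq_mul, aux_unif_Iic]
    have h1 : P (E i ∩ Uξ ⁻¹' B) = ((P.restrict (E i)).map Uξ) B := by
      rw [Measure.map_apply hUξ0 hB, Measure.restrict_apply (hUξ0 hB), inter_comm]
    rw [h1, hν, Measure.smul_apply, smul_eq_mul]
  -- independence
  refine ⟨Uξ, hUξG, hmapUξ, ?_⟩
  rw [ProbabilityTheory.indepFun_iff_measure_inter_preimage_eq_mul]
  intro A B hA hB
  have hPUB : P (Uξ ⁻¹' B) = (volume.restrict (Icc (0:ℝ) 1)) B := by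
    rw [← Measure.map_apply hUξ0 hB, hmapUξ]
  have hterm : ∀ i, P (E i ∩ (ξ ⁻¹' A ∩ Uξ ⁻¹' B))
      = (if x i ∈ A then p i else 0) * P (Uξ ⁻¹' B) := by
    intro i
    by_cases hxA : x i ∈ A
    · have hEA : E i ∩ (ξ ⁻¹' A ∩ Uξ ⁻¹' B) = E i ∩ Uξ ⁻¹' B := by
        ext ω
        simp only [mem_inter_iff, mem_preimage]
        constructor
        · rintro ⟨h1, _, h3⟩; exact ⟨h1, h3⟩
        · rintro ⟨h1, h3⟩
          have h2 : ξ ω = x i := h1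
          exact ⟨h1, by rw [h2]; exact hxA, h3⟩
      rw [hEA, if_pos hxA, hatomB i B hB, hPUB]
    · have hEA : E i ∩ (ξ ⁻¹' A ∩ Uξ ⁻¹' B) = ∅ := by
        apply eq_empty_iff_forall_notMem.2
        rintro ω ⟨h1, h2, -⟩
        have h1' : ξ ω = x i := h1
        exact hxA (h1' ▸ h2)
      rw [hEA, measure_empty, if_neg hxA, zero_mul]
  have htermA : ∀ i, P (E i ∩ ξ ⁻¹' A) = if x i ∈ A then p i else 0 := by
    intro i
    by_cases hxA : x i ∈ A
    · have hEA : E i ∩ ξ ⁻¹' A = E i := by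
        apply inter_eq_left.2
        intro ω h1
        have h1' : ξ ω = x i := h1
        simp only [mem_preimage, h1']
        exact hxA
      rw [hEA, if_pos hxA, hPE]
    · have hEA : E i ∩ ξ ⁻¹' A = ∅ := by
        apply eq_empty_iff_forall_notMem.2
        rintro ω ⟨h1, h2⟩
        have h1' : ξ ω = x i := h1
        exact hxA (h1' ▸ h2)
      rw [hEA, measure_empty, if_neg hxA]
  have hPA : P (ξ ⁻¹' A) = ∑ i, (if x i ∈ A then p i else 0) := by
    rw [hsplit _ (hξ0 hA)]
    exact Finset.sum_congr rfl (fun i _ => htermA i)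
  rw [hsplit _ ((hξ0 hA).inter (hUξ0 hB))]
  simp_rw [hterm]
  rw [← Finset.sum_mul, hPA]
end

section
/- Let (Ω,F,P) be a probability space supporting a uniform random variable on [0,1] measurable with respect to a sub-σ-algebra G that is rich enough (in the sense that every square-integrable law on C([0,T];H₀) is realized by some continuous B([0,T])⊗G-measurable process). Then for every μ ∈ P₂(C([0,T];H₀)) there exist a continuous B([0,T])⊗G-measurable process ξ with law μ and a G-measurable random variable U_ξ uniform on [0,1] such that ξ and U_ξ are independent. -/
open MeasureTheory

/-- The path space `C([0,T]; H₀)` with the sup norm. -/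
abbrev PathSp (T : ℝ) (H₀ : Type*) [NormedAddCommGroup H₀] :=
  C(Set.Icc (0:ℝ) T, H₀)

set_option maxHeartbeats 1000000
set_option synthInstance.maxHeartbeats 1000000

/-- If `G` supports a uniform random variable and is rich enough (every square-integrable
law on `C([0,T];H₀)` is realized by a `G`-measurable process), then every
`μ ∈ P₂(C([0,T];H₀))` is realized by a `G`-measurable process `ξ` together with a
`G`-measurable uniform random variable independent of `ξ`. -/
theorem stmt_6 {Ω H₀ : Type*} (G : MeasurableSpace Ω) [MeasurableSpace Ω]
    [NormedAddCommGroup H₀] [InnerProductSpace ℝ H₀] [CompleteSpace H₀]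
    [SecondCountableTopology H₀] [Nontrivial H₀]
    (hG : G ≤ ‹MeasurableSpace Ω›)
    (P : Measure Ω) [IsProbabilityMeasure P]
    (T : ℝ) (hT : 0 < T)
    [MeasurableSpace (PathSp T H₀)] [BorelSpace (PathSp T H₀)]
    (hUG : ∃ U : Ω → ℝ, Measurable[G] U ∧
      P.map U = volume.restrict (Set.Icc (0:ℝ) 1))
    (hrich : ∀ ν : Measure (PathSp T H₀), IsProbabilityMeasure ν →
      Integrable (fun x : PathSp T H₀ => ‖x‖ ^ 2) ν →
      ∃ ξ : Ω → PathSp T H₀,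
        Measurable[G] ξ ∧ Integrable (fun ω => ‖ξ ω‖ ^ 2) P ∧ P.map ξ = ν)
    (μ : Measure (PathSp T H₀)) [IsProbabilityMeasure μ]
    (hμ2 : Integrable (fun x : PathSp T H₀ => ‖x‖ ^ 2) μ) :
    ∃ (ξ : Ω → PathSp T H₀) (Uξ : Ω → ℝ),
      Measurable[G] ξ ∧ Integrable (fun ω => ‖ξ ω‖ ^ 2) P ∧ P.map ξ = μ ∧
      Measurable[G] Uξ ∧ P.map Uξ = volume.restrict (Set.Icc (0:ℝ) 1) ∧
      ProbabilityTheory.IndepFun ξ Uξ P := by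
  classical
  set lam : Measure ℝ := volume.restrict (Set.Icc (0:ℝ) 1) with hlam
  haveI hlamP : IsProbabilityMeasure lam := ⟨by simp [hlam]⟩
  -- a unit vector in H₀
  obtain ⟨x₀, hx₀⟩ := exists_ne (0 : H₀)
  set e : H₀ := ‖x₀‖⁻¹ • x₀ with he
  have hnorme : ‖e‖ = 1 := norm_smul_inv_norm hx₀
  -- the compression map g and its left inverse h
  set g : ℝ → ℝ := fun s => s / (1 + |s|) with hgdef
  have hgden : ∀ s : ℝ, (0:ℝ) < 1 + |s| := fun s => by positivity
  have hgcont : Continuous g :=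
    continuous_id.div (continuous_const.add continuous_abs) (fun s => (hgden s).ne')
  have hgabs : ∀ s : ℝ, |g s| = |s| / (1 + |s|) := by
    intro s
    rw [hgdef]
    rw [abs_div, abs_of_pos (hgden s)]
  set hfun : ℝ → ℝ := fun t => t / (1 - |t|) with hhdef
  have hhmeas : Measurable hfun :=
    measurable_id.div (measurable_const.sub measurable_abs)
  have hhg : ∀ s : ℝ, hfun (g s) = s := by
    intro s
    have h1 : 1 - |g s| = 1 / (1 + |s|) := by
      rw [hgabs]
      field_simp
      ring
    rw [hhdef]
    simp only
    rw [h1, hgdef]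
    simp only
    field_simp
  -- the embedding f : ℝ → PathSp
  have h0T : (0:ℝ) ∈ Set.Icc (0:ℝ) T := ⟨le_refl 0, hT.le⟩
  set pt : Set.Icc (0:ℝ) T := ⟨0, h0T⟩ with hpt
  set f : ℝ → PathSp T H₀ := fun s => ContinuousMap.const _ (g s • e) with hfdef
  have hfcont : Continuous f :=
    ContinuousMap.continuous_const'.comp (hgcont.smul continuous_const)
  have hfnorm : ∀ s : ℝ, ‖f s‖ ≤ 1 := by
    intro s
    refine (ContinuousMap.norm_le _ zero_le_one).2 fun t => ?_
    simp only [hfdef, ContinuousMap.const_apply, norm_smul, hnorme, mul_one,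
      Real.norm_eq_abs]
    rw [hgabs]
    rw [div_le_one (hgden s)]
    linarith [abs_nonneg s]
  -- the evaluation functional v : PathSp → ℝ with v ∘ f = g
  set v : PathSp T H₀ → ℝ := fun x => inner ℝ (x pt) e with hvdef
  have hvcont : Continuous v := by
    have : Continuous fun x : PathSp T H₀ => x pt := continuous_eval_const pt
    exact (continuous_inner.comp (this.prodMk continuous_const))
  have hvf : ∀ s : ℝ, v (f s) = g s := by
    intro s
    simp only [hvdef, hfdef, ContinuousMap.const_apply, real_inner_smul_left]
    rw [real_inner_self_eq_norm_sq, hnorme]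
    ring
  -- Borel isomorphism B : ℝ × PathSp ≃ᵐ ℝ
  haveI : Uncountable (ℝ × PathSp T H₀) := by infer_instance
  have hnc1 : ¬Countable (ℝ × PathSp T H₀) := not_countable
  have hnc2 : ¬Countable ℝ := not_countable
  set B : (ℝ × PathSp T H₀) ≃ᵐ ℝ := PolishSpace.measurableEquivOfNotCountable hnc1 hnc2
    with hBdef
  -- J and its measurable left inverse Φ
  set J : ℝ × PathSp T H₀ → PathSp T H₀ := fun p => f (B p) with hJdef
  have hJmeas : Measurable J := hfcont.measurable.comp B.measurable
  set Φ : PathSp T H₀ → ℝ × PathSp T H₀ := fun x => B.symm (hfun (v x)) with hΦdef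
  have hΦmeas : Measurable Φ :=
    B.symm.measurable.comp (hhmeas.comp hvcont.measurable)
  have hΦJ : ∀ p, Φ (J p) = p := by
    intro p
    simp only [hΦdef, hJdef, hvf, hhg, MeasurableEquiv.symm_apply_apply]
  -- the pushforward measure ν
  set ν : Measure (PathSp T H₀) := (lam.prod μ).map J with hνdef
  haveI hνP : IsProbabilityMeasure ν := Measure.isProbabilityMeasure_map hJmeas.aemeasurable
  have hν2 : Integrable (fun x : PathSp T H₀ => ‖x‖ ^ 2) ν := by
    rw [hνdef, integrable_map_measure (g := fun x : PathSp T H₀ => ‖x‖ ^ 2)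
      (continuous_norm.pow 2).aestronglyMeasurable hJmeas.aemeasurable]
    refine Integrable.mono' (integrable_const (1:ℝ))
      ((hJmeas.norm.pow_const 2).aestronglyMeasurable) (ae_of_all _ fun p => ?_)
    have h1 : ‖J p‖ ≤ 1 := hfnorm _
    have h2 : (0:ℝ) ≤ ‖J p‖ := norm_nonneg _
    simp only [Function.comp, Real.norm_eq_abs]
    rw [abs_of_nonneg (by positivity)]
    nlinarith
  -- realize ν
  obtain ⟨ξt, hξtG, hξt2, hξtlaw⟩ := hrich ν hνP hν2
  have hξtmeas : Measurable ξt := hξtG.mono hG le_rfl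
  -- the pair process
  set pair : Ω → ℝ × PathSp T H₀ := fun ω => Φ (ξt ω) with hpairdef
  have hpairG : Measurable[G] pair := hΦmeas.comp hξtG
  have hpairmeas : Measurable pair := hΦmeas.comp hξtmeas
  have hpairlaw : P.map pair = lam.prod μ := by
    rw [hpairdef]
    have : (fun ω => Φ (ξt ω)) = Φ ∘ ξt := rfl
    rw [this, ← Measure.map_map hΦmeas hξtmeas, hξtlaw, hνdef,
      Measure.map_map hΦmeas hJmeas]
    have : Φ ∘ J = id := funext hΦJ
    rw [this, Measure.map_id]
  refine ⟨fun ω => (pair ω).2, fun ω => (pair ω).1,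
    measurable_snd.comp hpairG, ?_, ?_, measurable_fst.comp hpairG, ?_, ?_⟩
  · -- integrability of ‖ξ‖²
    have hξmeas : Measurable fun ω => (pair ω).2 := measurable_snd.comp hpairmeas
    have hξlaw : P.map (fun ω => (pair ω).2) = μ := by
      have : (fun ω => (pair ω).2) = Prod.snd ∘ pair := rfl
      rw [this, ← Measure.map_map measurable_snd hpairmeas, hpairlaw]
      simp
    have := (integrable_map_measure (g := fun x : PathSp T H₀ => ‖x‖ ^ 2)
      (continuous_norm.pow 2).aestronglyMeasurable hξmeas.aemeasurable).1
      (by rw [hξlaw]; exact hμ2)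
    exact this
  · -- law of ξ
    have : (fun ω => (pair ω).2) = Prod.snd ∘ pair := rfl
    rw [this, ← Measure.map_map measurable_snd hpairmeas, hpairlaw]
    simp
  · -- law of Uξ
    have : (fun ω => (pair ω).1) = Prod.fst ∘ pair := rfl
    rw [this, ← Measure.map_map measurable_fst hpairmeas, hpairlaw]
    simp [hlam]
  · -- independence
    have hξmeas : Measurable fun ω => (pair ω).2 := measurable_snd.comp hpairmeas
    have hUmeas : Measurable fun ω => (pair ω).1 := measurable_fst.comp hpairmeas
    rw [ProbabilityTheory.indepFun_iff_map_prod_eq_prod_map_map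
      hξmeas.aemeasurable hUmeas.aemeasurable]
    have hjoint : P.map (fun ω => ((pair ω).2, (pair ω).1)) = μ.prod lam := by
      have : (fun ω => ((pair ω).2, (pair ω).1)) = Prod.swap ∘ pair := rfl
      rw [this, ← Measure.map_map measurable_swap hpairmeas, hpairlaw,
        Measure.prod_swap]
    have hξlaw : P.map (fun ω => (pair ω).2) = μ := by
      have : (fun ω => (pair ω).2) = Prod.snd ∘ pair := rfl
      rw [this, ← Measure.map_map measurable_snd hpairmeas, hpairlaw]
      simp
    have hUlaw : P.map (fun ω => (pair ω).1) = lam := by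
      have : (fun ω => (pair ω).1) = Prod.fst ∘ pair := rfl
      rw [this, ← Measure.map_map measurable_fst hpairmeas, hpairlaw]
      simp
    rw [hjoint, hξlaw, hUlaw]
end
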